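/- Let Z be standard normal and c > 0. Then E[min{1, exp(c Z − c²/2)}] = Φ(−c/2) + Φ(−c/2) = 2Φ(−c/2). -/
import Mathlib

open Real MeasureTheory

/-- The standard normal density `φ`. -/
noncomputable def stdNormalPDF (u : ℝ) : ℝ :=
  (Real.sqrt (2 * Real.pi))⁻¹ * Real.exp (-u ^ 2 / 2)

/-- The standard normal CDF `Φ`. -/
noncomputable def stdNormalCDF (t : ℝ) : ℝ :=
  ∫ u in Set.Iic t, stdNormalPDF u

lemma integral_Iic_comp_sub (a d : ℝ) (f : ℝ → ℝ) :
    (∫ x in Set.Iic a, f (x - d)) = ∫ x in Set.Iic (a - d), f x := by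
  have A : MeasurableEmbedding fun x : ℝ => x - d :=
    (Homeomorph.subRight d).isClosedEmbedding.measurableEmbedding
  have := A.setIntegral_map (μ := volume) f (Set.Iic (a - d))
  rw [show Measure.map (fun x : ℝ => x - d) volume = volume by
    simp_rw [sub_eq_add_neg]; exact map_add_right_eq_self volume (-d)] at this
  rw [this]
  congr 1
  ext x
  simp [sub_le_iff_le_add, sub_le_sub_iff_right]

lemma stdNormalPDF_integrable : Integrable stdNormalPDF := by
  have : Integrable fun x : ℝ => Real.exp (-(1/2) * x ^ 2) :=
    integrable_exp_neg_mul_sq (by norm_num)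
  have h := this.const_mul (Real.sqrt (2 * Real.pi))⁻¹
  refine h.congr (Filter.Eventually.of_forall fun x => ?_)
  unfold stdNormalPDF
  ring_nf

lemma key_eq (c : ℝ) (z : ℝ) :
    Real.exp (c * z - c ^ 2 / 2) * stdNormalPDF z = stdNormalPDF (z - c) := by
  unfold stdNormalPDF
  rw [← mul_assoc, mul_comm (Real.exp _), mul_assoc, ← Real.exp_add]
  congr 2
  ring

/-- For `Z` standard normal and `c > 0`, `E[min{1, exp(cZ − c²/2)}] = 2Φ(−c/2)`. -/
theorem min_exp_acceptance (c : ℝ) (hc : 0 < c) :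
    (∫ z : ℝ, min 1 (Real.exp (c * z - c ^ 2 / 2)) * stdNormalPDF z)
      = 2 * stdNormalCDF (-c / 2) := by
  set f : ℝ → ℝ := fun z => min 1 (Real.exp (c * z - c ^ 2 / 2)) * stdNormalPDF z with hf
  have hpdf_nonneg : ∀ u, 0 ≤ stdNormalPDF u := fun u => by
    unfold stdNormalPDF
    positivity
  have hleft : ∀ z ∈ Set.Iic (c/2), f z = stdNormalPDF (z - c) := by
    intro z hz
    simp only [Set.mem_Iic] at hz
    have h1 : Real.exp (c * z - c ^ 2 / 2) ≤ 1 := by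
      rw [← Real.exp_zero]
      apply Real.exp_le_exp.2
      nlinarith
    rw [hf]
    simp only [min_eq_right h1]
    exact key_eq c z
  have hright : ∀ z ∈ Set.Ioi (c/2), f z = stdNormalPDF z := by
    intro z hz
    simp only [Set.mem_Ioi] at hz
    have h1 : (1:ℝ) ≤ Real.exp (c * z - c ^ 2 / 2) := by
      rw [← Real.exp_zero]
      apply Real.exp_le_exp.2
      nlinarith
    rw [hf]
    simp [min_eq_left h1]
  have hIntL : IntegrableOn f (Set.Iic (c/2)) := by
    refine ((stdNormalPDF_integrable.comp_sub_right c).integrableOn).congr_fun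
      (fun z hz => (hleft z hz).symm) measurableSet_Iic
  have hIntR : IntegrableOn f (Set.Ioi (c/2)) := by
    refine (stdNormalPDF_integrable.integrableOn).congr_fun
      (fun z hz => (hright z hz).symm) measurableSet_Ioi
  rw [← intervalIntegral.integral_Iic_add_Ioi hIntL hIntR]
  have hL : (∫ z in Set.Iic (c/2), f z) = stdNormalCDF (-c/2) := by
    rw [setIntegral_congr_fun measurableSet_Iic hleft,
      integral_Iic_comp_sub (c/2) c stdNormalPDF]
    rw [stdNormalCDF]
    ring_nf
  have hR : (∫ z in Set.Ioi (c/2), f z) = stdNormalCDF (-c/2) := by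
    rw [setIntegral_congr_fun measurableSet_Ioi hright]
    have : (∫ z in Set.Ioi (c/2), stdNormalPDF z)
        = ∫ z in Set.Ioi (c/2), stdNormalPDF (-z) := by
      refine setIntegral_congr_fun measurableSet_Ioi fun z _ => ?_
      unfold stdNormalPDF
      ring_nf
    rw [this, integral_comp_neg_Ioi, stdNormalCDF, neg_div]
  rw [hL, hR]
  ring
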